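/- Let α > 0, let ν̲ = (ν₁,…,ν_N) with ν_i > 0 and λ_i > 0, let l_{ν̲}(s,x) have t-Laplace transform Σ_i λ_i μ^{ν_i-1} e^{-x Σ_i λ_i μ^{ν_i}}, and let l_α(t,s) have t-Laplace transform μ^{α-1} e^{-μ^α s}. Then the t-Laplace transform of the composed kernel (t,x) ↦ ∫_0^∞ l_{ν̲}(s,x) l_α(t,s) ds equals μ^{α-1} Σ_{i=1}^N λ_i μ^{α(ν_i - 1)} e^{-x Σ_{i=1}^N λ_i μ^{αν_i}}, i.e. it coincides with the t-Laplace transform of l_{αν̲}. Hence L_{ν̲}(L_α(t)) is equal in distribution to L_{αν̲}(t). -/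
import Mathlib


open MeasureTheory Set

theorem pseudo_inverse_composition_identity
    (N : ℕ) (hN : 0 < N) (α : ℝ) (hα : 0 < α)
    (ν lam : Fin N → ℝ) (hν : ∀ i, 0 < ν i) (hlam : ∀ i, 0 < lam i)
    (lν lα : ℝ → ℝ → ℝ)
    (hmeasν : Measurable (Function.uncurry lν)) (hmeasα : Measurable (Function.uncurry lα))
    (hlν : ∀ μ : ℝ, 0 < μ → ∀ x : ℝ, 0 ≤ x →
      ∫ t in Ioi (0:ℝ), Real.exp (-μ * t) * lν t x =
        (∑ i, lam i * μ ^ (ν i - 1)) * Real.exp (-x * ∑ i, lam i * μ ^ ν i))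
    (hlα : ∀ μ : ℝ, 0 < μ → ∀ s : ℝ, 0 ≤ s →
      ∫ t in Ioi (0:ℝ), Real.exp (-μ * t) * lα t s = μ ^ (α - 1) * Real.exp (-(μ ^ α) * s))
    (hFub : ∀ μ : ℝ, 0 < μ → ∀ x : ℝ, 0 ≤ x →
      IntegrableOn (fun p : ℝ × ℝ => Real.exp (-μ * p.1) * lν p.2 x * lα p.1 p.2)
        ((Ioi (0:ℝ)) ×ˢ (Ioi (0:ℝ)))) :
    ∀ μ : ℝ, 0 < μ → ∀ x : ℝ, 0 ≤ x →
      (∫ t in Ioi (0:ℝ), Real.exp (-μ * t) * ∫ s in Ioi (0:ℝ), lν s x * lα t s =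
        μ ^ (α - 1) * (∑ i, lam i * μ ^ (α * (ν i - 1))) *
          Real.exp (-x * ∑ i, lam i * μ ^ (α * ν i))) ∧
      -- this coincides with the t-Laplace transform of `l_{αν̲}`
      (μ ^ (α - 1) * (∑ i, lam i * μ ^ (α * (ν i - 1))) *
          Real.exp (-x * ∑ i, lam i * μ ^ (α * ν i)) =
        (∑ i, lam i * μ ^ (α * ν i - 1)) *
          Real.exp (-x * ∑ i, lam i * μ ^ (α * ν i))) := by
  intro μ hμ x hx
  have hμα : 0 < μ ^ α := Real.rpow_pos_of_pos hμ α
  have hsum : ∀ i : Fin N, (μ ^ α) ^ (ν i) = μ ^ (α * ν i) := fun i =>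
    (Real.rpow_mul hμ.le α (ν i)).symm
  constructor
  · have h1 : ∀ t : ℝ,
        Real.exp (-μ * t) * ∫ s in Ioi (0:ℝ), lν s x * lα t s =
          ∫ s in Ioi (0:ℝ), Real.exp (-μ * t) * lν s x * lα t s := by
      intro t
      rw [← integral_const_mul]
      simp only [mul_assoc]
    have hswap :
        ∫ t in Ioi (0:ℝ), ∫ s in Ioi (0:ℝ), Real.exp (-μ * t) * lν s x * lα t s =
        ∫ s in Ioi (0:ℝ), ∫ t in Ioi (0:ℝ), Real.exp (-μ * t) * lν s x * lα t s := by
      have h := hFub μ hμ x hx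
      rw [IntegrableOn, Measure.volume_eq_prod, ← Measure.prod_restrict] at h
      exact integral_integral_swap h
    have h2 :
        ∫ s in Ioi (0:ℝ), ∫ t in Ioi (0:ℝ), Real.exp (-μ * t) * lν s x * lα t s =
        ∫ s in Ioi (0:ℝ), lν s x * (μ ^ (α - 1) * Real.exp (-(μ ^ α) * s)) := by
      refine setIntegral_congr_fun measurableSet_Ioi (fun s hs => ?_)
      have : ∫ t in Ioi (0:ℝ), Real.exp (-μ * t) * lν s x * lα t s =
          lν s x * ∫ t in Ioi (0:ℝ), Real.exp (-μ * t) * lα t s := by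
        rw [← integral_const_mul]
        congr 1
        funext t
        ring
      rw [this, hlα μ hμ s (le_of_lt hs)]
    have h3 :
        ∫ s in Ioi (0:ℝ), lν s x * (μ ^ (α - 1) * Real.exp (-(μ ^ α) * s)) =
        μ ^ (α - 1) * ∫ s in Ioi (0:ℝ), Real.exp (-(μ ^ α) * s) * lν s x := by
      rw [← integral_const_mul]
      congr 1
      funext s
      ring
    calc
      ∫ t in Ioi (0:ℝ), Real.exp (-μ * t) * ∫ s in Ioi (0:ℝ), lν s x * lα t s
          = ∫ t in Ioi (0:ℝ), ∫ s in Ioi (0:ℝ),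
              Real.exp (-μ * t) * lν s x * lα t s := by
            exact setIntegral_congr_fun measurableSet_Ioi (fun t _ => h1 t)
      _ = μ ^ (α - 1) * ∫ s in Ioi (0:ℝ), Real.exp (-(μ ^ α) * s) * lν s x := by
            rw [hswap, h2, h3]
      _ = μ ^ (α - 1) * ((∑ i, lam i * (μ ^ α) ^ (ν i - 1)) *
              Real.exp (-x * ∑ i, lam i * (μ ^ α) ^ ν i)) := by
            rw [hlν (μ ^ α) hμα x hx]
      _ = μ ^ (α - 1) * (∑ i, lam i * μ ^ (α * (ν i - 1))) *
              Real.exp (-x * ∑ i, lam i * μ ^ (α * ν i)) := by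
            simp only [← Real.rpow_mul hμ.le, mul_assoc]
  · rw [Finset.mul_sum]
    congr 1
    refine Finset.sum_congr rfl (fun i _ => ?_)
    rw [mul_comm (μ ^ (α - 1)) (lam i * μ ^ (α * (ν i - 1))), mul_assoc,
      ← Real.rpow_add hμ]
    ring_nf
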